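/- For every real number x > 0, the limit as n → ∞ of 2(n−1)·x · ∫₁^∞ ((n(r−1)+1)/r^(n+2)) · exp(−((n(r−1)+1)/rⁿ)·x²) dr equals 2(1 − e^(−x²))/x + 2x · ∫₀¹ exp(−(s − s·log s)·x²) ds. (This is Theorem 1.2 of the paper: the expected density 𝔻_{|pₙ|}(x) = 2πx·𝔻_{pₙ}(x) of nonvanishing critical values of |pₙ|.) -/

import Mathlib

open MeasureTheory Real Filter Set

noncomputable def Ga (x : ℝ) (n : ℕ) (s : ℝ) : ℝ :=
  ((n : ℝ) * (s ^ (-((n:ℝ)-1)⁻¹) - 1) + 1) * s ^ (2 * ((n:ℝ)-1)⁻¹) *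
    Real.exp (-(((n : ℝ) * (s ^ (-((n:ℝ)-1)⁻¹) - 1) + 1) * s ^ ((n:ℝ) * ((n:ℝ)-1)⁻¹)) * x ^ 2)

lemma cov (x : ℝ) {n : ℕ} (hn : 2 ≤ n) :
    ∫ r in Ioi (1:ℝ), (((n : ℝ) * (r - 1) + 1) / r ^ (n + 2)) *
        Real.exp (-(((n : ℝ) * (r - 1) + 1) / r ^ n) * x ^ 2)
      = ((n:ℝ)-1)⁻¹ * ∫ s in Ioo (0:ℝ) 1, Ga x n s := by
  have hm : (0:ℝ) < (n:ℝ) - 1 := by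
    have h2 : (2:ℝ) ≤ (n:ℝ) := by exact_mod_cast hn
    linarith
  have he_neg : -((n:ℝ)-1)⁻¹ < 0 := by
    simp only [neg_neg, Left.neg_neg_iff]; exact inv_pos.mpr hm
  have he_ne : -((n:ℝ)-1)⁻¹ ≠ 0 := ne_of_lt he_neg
  have himg : (fun s : ℝ => s ^ (-((n:ℝ)-1)⁻¹)) '' Ioo 0 1 = Ioi 1 := by
    apply Subset.antisymm
    · rintro r ⟨s, hs, rfl⟩
      exact mem_Ioi.mpr ((Real.one_lt_rpow_iff_of_pos hs.1).mpr (Or.inr ⟨hs.2, he_neg⟩))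
    · rintro r hr
      have hr1 : (1:ℝ) < r := hr
      have hr0 : (0:ℝ) < r := lt_trans one_pos hr1
      refine ⟨r ^ (-((n:ℝ)-1)⁻¹)⁻¹, ⟨Real.rpow_pos_of_pos hr0 _,
        Real.rpow_lt_one_of_one_lt_of_neg hr1 (by simpa using inv_neg''.mpr he_neg)⟩, ?_⟩
      simp only
      rw [← Real.rpow_mul hr0.le, inv_mul_cancel₀ he_ne, Real.rpow_one]
  have hinj : InjOn (fun s : ℝ => s ^ (-((n:ℝ)-1)⁻¹)) (Ioo 0 1) := by
    intro a ha b hb hab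
    have h := congrArg (fun t : ℝ => t ^ (-((n:ℝ)-1)⁻¹)⁻¹) hab
    simpa only [← Real.rpow_mul ha.1.le, ← Real.rpow_mul hb.1.le,
      mul_inv_cancel₀ he_ne, Real.rpow_one] using h
  have hderiv : ∀ s ∈ Ioo (0:ℝ) 1, HasDerivWithinAt (fun s : ℝ => s ^ (-((n:ℝ)-1)⁻¹))
      ((-((n:ℝ)-1)⁻¹) * s ^ ((-((n:ℝ)-1)⁻¹) - 1)) (Ioo 0 1) s :=
    fun s hs => (Real.hasDerivAt_rpow_const (Or.inl hs.1.ne')).hasDerivWithinAt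
  rw [← himg, integral_image_eq_integral_abs_deriv_smul measurableSet_Ioo hderiv hinj,
    ← MeasureTheory.integral_const_mul]
  apply setIntegral_congr_fun measurableSet_Ioo
  intro s hs
  have hsp : 0 < s := hs.1
  have hspow : ∀ a : ℝ, s ^ a = Real.exp (Real.log s * a) := fun a => Real.rpow_def_of_pos hsp a
  simp only [Ga, smul_eq_mul, hspow, ← Real.exp_nat_mul]
  rw [abs_mul, abs_of_neg he_neg, abs_of_pos (Real.exp_pos _), neg_neg]
  rw [div_eq_mul_inv (_ * _ + 1), div_eq_mul_inv (_ * _ + 1), ← Real.exp_neg, ← Real.exp_neg]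
  have h2 : -(↑(n:ℕ) * (Real.log s * (-((n:ℝ)-1)⁻¹))) = Real.log s * ((n:ℝ) * ((n:ℝ)-1)⁻¹) := by
    ring
  rw [h2]
  have calc1 : Real.exp (Real.log s * (2 * ((n:ℝ)-1)⁻¹))
      = Real.exp (Real.log s * (-((n:ℝ)-1)⁻¹ - 1)) * Real.exp (-(↑(n + 2 : ℕ) * (Real.log s * (-((n:ℝ)-1)⁻¹)))) := by
    rw [← Real.exp_add]
    congr 1
    push_cast
    field_simp
    ring
  rw [calc1]
  ring

lemma aux_inv_tendsto : Tendsto (fun n : ℕ => ((n:ℝ)-1)⁻¹) atTop (nhds 0) := by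
  have h1 : Tendsto (fun n : ℕ => (n:ℝ) - 1) atTop atTop := by
    simpa [sub_eq_add_neg] using
      tendsto_atTop_add_const_right atTop (-1 : ℝ) tendsto_natCast_atTop_atTop
  exact h1.inv_tendsto_atTop

lemma aux_ratio_tendsto : Tendsto (fun n : ℕ => (n:ℝ) * ((n:ℝ)-1)⁻¹) atTop (nhds 1) := by
  have h2 : Tendsto (fun n : ℕ => 1 + ((n:ℝ)-1)⁻¹) atTop (nhds (1 + 0)) :=
    tendsto_const_nhds.add aux_inv_tendsto
  rw [add_zero] at h2
  refine h2.congr' ?_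
  filter_upwards [eventually_ge_atTop 2] with n hn
  have hm : (0:ℝ) < (n:ℝ) - 1 := by
    have : (2:ℝ) ≤ (n:ℝ) := by exact_mod_cast hn
    linarith
  field_simp
  ring

lemma aux_expslope : Tendsto (fun h : ℝ => (Real.exp h - 1)/h) (nhdsWithin 0 {0}ᶜ) (nhds 1) := by
  have := hasDerivAt_iff_tendsto_slope.mp (Real.hasDerivAt_exp 0)
  rw [Real.exp_zero] at this
  refine this.congr (fun h => ?_)
  simp [slope_def_field, div_eq_div_iff]

noncomputable def Ginf (x : ℝ) (s : ℝ) : ℝ :=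
  (1 - Real.log s) * Real.exp (-(s - s * Real.log s) * x ^ 2)

lemma Ga_pointwise (x : ℝ) {s : ℝ} (hs : s ∈ Ioo (0:ℝ) 1) :
    Tendsto (fun n : ℕ => Ga x n s) atTop (nhds (Ginf x s)) := by
  have hsp : 0 < s := hs.1
  have hL : Real.log s < 0 := Real.log_neg hsp hs.2
  set L := Real.log s with hLdef
  -- h n := L * -((n:ℝ)-1)⁻¹
  have hh0 : Tendsto (fun n : ℕ => L * -((n:ℝ)-1)⁻¹) atTop (nhds 0) := by
    have := (aux_inv_tendsto.neg).const_mul L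
    simpa using this
  have hhne : ∀ᶠ n : ℕ in atTop, L * -((n:ℝ)-1)⁻¹ ≠ 0 := by
    filter_upwards [eventually_ge_atTop 2] with n hn
    have hm : (0:ℝ) < (n:ℝ) - 1 := by
      have : (2:ℝ) ≤ (n:ℝ) := by exact_mod_cast hn
      linarith
    have : 0 < L * -((n:ℝ)-1)⁻¹ := by
      apply mul_pos_of_neg_of_neg hL
      simp [inv_pos.mpr hm]
    exact ne_of_gt this
  have hslope : Tendsto (fun n : ℕ =>
      (Real.exp (L * -((n:ℝ)-1)⁻¹) - 1) / (L * -((n:ℝ)-1)⁻¹)) atTop (nhds 1) := by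
    apply aux_expslope.comp
    rw [tendsto_nhdsWithin_iff]
    exact ⟨hh0, hhne⟩
  -- A n → 1 - L
  have hA : Tendsto (fun n : ℕ => (n:ℝ) * (Real.exp (L * -((n:ℝ)-1)⁻¹) - 1) + 1)
      atTop (nhds (1 - L)) := by
    have hmain : Tendsto (fun n : ℕ =>
        ((n:ℝ) * ((n:ℝ)-1)⁻¹) * (-L) *
          ((Real.exp (L * -((n:ℝ)-1)⁻¹) - 1) / (L * -((n:ℝ)-1)⁻¹)) + 1)
        atTop (nhds (1 * -L * 1 + 1)) :=
      (((aux_ratio_tendsto.mul_const (-L)).mul hslope)).add tendsto_const_nhds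
    have : (1:ℝ) * -L * 1 + 1 = 1 - L := by ring
    rw [this] at hmain
    refine hmain.congr' ?_
    filter_upwards [eventually_ge_atTop 2] with n hn
    have hm : (0:ℝ) < (n:ℝ) - 1 := by
      have : (2:ℝ) ≤ (n:ℝ) := by exact_mod_cast hn
      linarith
    have hLne : L ≠ 0 := ne_of_lt hL
    field_simp
  -- second factor → 1
  have hP : Tendsto (fun n : ℕ => Real.exp (L * (2 * ((n:ℝ)-1)⁻¹))) atTop (nhds 1) := by
    have harg : Tendsto (fun n : ℕ => L * (2 * ((n:ℝ)-1)⁻¹)) atTop (nhds 0) := by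
      have := (aux_inv_tendsto.const_mul 2).const_mul L
      simpa using this
    have := (Real.continuous_exp.tendsto 0).comp harg
    rw [Real.exp_zero] at this
    exact this
  -- third exponent factor s^{n/(n-1)} → s
  have hQ : Tendsto (fun n : ℕ => Real.exp (L * ((n:ℝ) * ((n:ℝ)-1)⁻¹))) atTop
      (nhds (Real.exp L)) := by
    have harg : Tendsto (fun n : ℕ => L * ((n:ℝ) * ((n:ℝ)-1)⁻¹)) atTop (nhds L) := by
      have := aux_ratio_tendsto.const_mul L
      simpa using this
    exact (Real.continuous_exp.tendsto L).comp harg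
  have hexpL : Real.exp L = s := Real.exp_log hsp
  rw [hexpL] at hQ
  -- assemble
  have hfull : Tendsto (fun n : ℕ =>
      ((n:ℝ) * (Real.exp (L * -((n:ℝ)-1)⁻¹) - 1) + 1) * Real.exp (L * (2 * ((n:ℝ)-1)⁻¹)) *
        Real.exp (-(((n:ℝ) * (Real.exp (L * -((n:ℝ)-1)⁻¹) - 1) + 1) *
          Real.exp (L * ((n:ℝ) * ((n:ℝ)-1)⁻¹))) * x ^ 2))
      atTop (nhds ((1 - L) * 1 * Real.exp (-((1 - L) * s) * x ^ 2))) := by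
    refine (hA.mul hP).mul ?_
    exact (Real.continuous_exp.tendsto _).comp (((hA.mul hQ).neg).mul_const (x^2))
  have heq : (1 - L) * 1 * Real.exp (-((1 - L) * s) * x ^ 2) = Ginf x s := by
    simp only [Ginf, ← hLdef, mul_one]
    ring_nf
  rw [heq] at hfull
  refine hfull.congr (fun n => ?_)
  simp only [Ga, Real.rpow_def_of_pos hsp, ← hLdef]

lemma neg_log_le {s : ℝ} (hsp : 0 < s) : -Real.log s ≤ 2 * s ^ (-(1:ℝ)/2) := by
  have h1 : Real.log (s ^ (-(1:ℝ)/2)) = (-(1:ℝ)/2) * Real.log s := Real.log_rpow hsp _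
  have h2 : Real.log (s ^ (-(1:ℝ)/2)) ≤ s ^ (-(1:ℝ)/2) - 1 :=
    Real.log_le_sub_one_of_pos (Real.rpow_pos_of_pos hsp _)
  have h3 : (0:ℝ) < s ^ (-(1:ℝ)/2) := Real.rpow_pos_of_pos hsp _
  nlinarith

lemma Ga_bound (x : ℝ) {n : ℕ} (hn : 2 ≤ n) {s : ℝ} (hs : s ∈ Ioo (0:ℝ) 1) :
    ‖Ga x n s‖ ≤ 1 + 4 * s ^ (-(1:ℝ)/2) := by
  have hsp : 0 < s := hs.1
  have hL : Real.log s < 0 := Real.log_neg hsp hs.2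
  have hm : (0:ℝ) < (n:ℝ) - 1 := by
    have : (2:ℝ) ≤ (n:ℝ) := by exact_mod_cast hn
    linarith
  set c : ℝ := -Real.log s with hc
  have hcpos : 0 < c := by simp [hc]; exact hL
  set h : ℝ := c * ((n:ℝ)-1)⁻¹ with hh
  have hhpos : 0 < h := mul_pos hcpos (inv_pos.mpr hm)
  -- rewrite Ga in exp form
  have hGa : Ga x n s = ((n:ℝ) * (Real.exp h - 1) + 1) * Real.exp (-(2*h)) *
      Real.exp (-(((n:ℝ) * (Real.exp h - 1) + 1) * Real.exp (-(c * ((n:ℝ) * ((n:ℝ)-1)⁻¹)))) * x ^ 2) := by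
    simp only [Ga, Real.rpow_def_of_pos hsp]
    rw [show Real.log s * -((n:ℝ)-1)⁻¹ = h by rw [hh, hc]; ring,
      show Real.log s * (2 * ((n:ℝ)-1)⁻¹) = -(2*h) by rw [hh, hc]; ring,
      show Real.log s * ((n:ℝ) * ((n:ℝ)-1)⁻¹) = -(c * ((n:ℝ) * ((n:ℝ)-1)⁻¹)) by rw [hc]; ring]
  have hA1 : (1:ℝ) ≤ (n:ℝ) * (Real.exp h - 1) + 1 := by
    have : (0:ℝ) ≤ (n:ℝ) * (Real.exp h - 1) := by
      apply mul_nonneg (Nat.cast_nonneg n)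
      have := Real.one_le_exp hhpos.le
      linarith
    linarith
  have hA0 : (0:ℝ) ≤ (n:ℝ) * (Real.exp h - 1) + 1 := le_trans zero_le_one hA1
  have hexp_le_one : Real.exp (-(((n:ℝ) * (Real.exp h - 1) + 1) *
      Real.exp (-(c * ((n:ℝ) * ((n:ℝ)-1)⁻¹)))) * x ^ 2) ≤ 1 := by
    rw [Real.exp_le_one_iff, neg_mul]
    have hAE : 0 ≤ ((n:ℝ) * (Real.exp h - 1) + 1) * Real.exp (-(c * ((n:ℝ) * ((n:ℝ)-1)⁻¹))) :=
      mul_nonneg hA0 (Real.exp_pos _).le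
    exact neg_nonpos.mpr (mul_nonneg hAE (sq_nonneg x))
  have hGa_nonneg : 0 ≤ Ga x n s := by
    rw [hGa]
    positivity
  rw [Real.norm_eq_abs, abs_of_nonneg hGa_nonneg, hGa]
  -- Ga ≤ A * exp(-2h) ≤ n h + 1 ≤ 2c + 1 ≤ 1 + 4 s^{-1/2}
  have step1 : ((n:ℝ) * (Real.exp h - 1) + 1) * Real.exp (-(2*h)) *
      Real.exp (-(((n:ℝ) * (Real.exp h - 1) + 1) * Real.exp (-(c * ((n:ℝ) * ((n:ℝ)-1)⁻¹)))) * x ^ 2)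
      ≤ ((n:ℝ) * (Real.exp h - 1) + 1) * Real.exp (-(2*h)) := by
    nlinarith [mul_nonneg hA0 (Real.exp_pos (-(2*h))).le, Real.exp_pos (-(2*h))]
  have hexpm1 : Real.exp h - 1 ≤ h * Real.exp h := by
    have := Real.add_one_le_exp (-h)
    have hE := Real.exp_pos h
    have hprod : Real.exp (-h) * Real.exp h = 1 := by
      rw [← Real.exp_add]; simp
    nlinarith
  have step2 : ((n:ℝ) * (Real.exp h - 1) + 1) * Real.exp (-(2*h)) ≤ (n:ℝ) * h + 1 := by
    have hE2 : Real.exp (-(2*h)) ≤ 1 := by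
      rw [Real.exp_le_one_iff]; linarith
    have hE2pos := Real.exp_pos (-(2*h))
    have key : Real.exp h * Real.exp (-(2*h)) = Real.exp (-h) := by
      rw [← Real.exp_add]; ring_nf
    have hEmh : Real.exp (-h) ≤ 1 := by
      rw [Real.exp_le_one_iff]; linarith
    have hn0 : (0:ℝ) ≤ (n:ℝ) := Nat.cast_nonneg n
    have t1 : (Real.exp h - 1) * Real.exp (-(2*h)) ≤ h * Real.exp h * Real.exp (-(2*h)) :=
      mul_le_mul_of_nonneg_right hexpm1 hE2pos.le
    have t2 : h * Real.exp h * Real.exp (-(2*h)) = h * Real.exp (-h) := by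
      rw [mul_assoc, key]
    have t3 : h * Real.exp (-h) ≤ h := by nlinarith
    have t4 : (Real.exp h - 1) * Real.exp (-(2*h)) ≤ h := by
      rw [t2] at t1; linarith
    nlinarith [mul_le_mul_of_nonneg_left t4 hn0]
  have h2n : (2:ℝ) ≤ (n:ℝ) := by exact_mod_cast hn
  have hr : (n:ℝ) * ((n:ℝ)-1)⁻¹ ≤ 2 := by
    rw [← div_eq_mul_inv, div_le_iff₀ hm]; linarith
  have step3 : (n:ℝ) * h + 1 ≤ 2 * c + 1 := by
    have heq : (n:ℝ) * h = c * ((n:ℝ) * ((n:ℝ)-1)⁻¹) := by rw [hh]; ring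
    nlinarith [mul_le_mul_of_nonneg_left hr hcpos.le]
  have step4 : 2 * c + 1 ≤ 1 + 4 * s ^ (-(1:ℝ)/2) := by
    have := neg_log_le hsp
    rw [hc]; linarith
  linarith

lemma Ga_contOn (x : ℝ) (n : ℕ) : ContinuousOn (Ga x n) (Ioo (0:ℝ) 1) := by
  have hr : ∀ p : ℝ, ContinuousOn (fun s : ℝ => s ^ p) (Ioo (0:ℝ) 1) := fun p =>
    ContinuousOn.rpow_const continuousOn_id (fun s hs => Or.inl (ne_of_gt hs.1))
  have hA : ContinuousOn (fun s : ℝ => (n:ℝ) * (s ^ (-((n:ℝ)-1)⁻¹) - 1) + 1) (Ioo (0:ℝ) 1) :=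
    (continuousOn_const.mul ((hr _).sub continuousOn_const)).add continuousOn_const
  exact (hA.mul (hr _)).mul (Real.continuous_exp.comp_continuousOn
    (((hA.mul (hr _)).neg).mul continuousOn_const))

lemma bound_integrable : IntegrableOn (fun s : ℝ => 1 + 4 * s ^ (-(1:ℝ)/2)) (Ioo (0:ℝ) 1) volume := by
  have h1 : IntegrableOn (fun s : ℝ => s ^ (-(1:ℝ)/2)) (Ioo (0:ℝ) 1) volume := by
    have := intervalIntegral.intervalIntegrable_rpow' (a := 0) (b := 1) (r := -(1:ℝ)/2)
      (by norm_num)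
    rwa [intervalIntegrable_iff_integrableOn_Ioo_of_le zero_le_one] at this
  exact (integrableOn_const measure_Ioo_lt_top.ne).add (h1.const_mul 4)

lemma tendG (x : ℝ) :
    Tendsto (fun n : ℕ => ∫ s in Ioo (0:ℝ) 1, Ga x n s) atTop
      (nhds (∫ s in Ioo (0:ℝ) 1, Ginf x s)) := by
  apply MeasureTheory.tendsto_integral_filter_of_dominated_convergence
      (bound := fun s => 1 + 4 * s ^ (-(1:ℝ)/2))
  · exact Eventually.of_forall fun n =>
      ((Ga_contOn x n).aestronglyMeasurable measurableSet_Ioo)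
  · filter_upwards [eventually_ge_atTop 2] with n hn
    rw [ae_restrict_iff' measurableSet_Ioo]
    exact ae_of_all _ fun s hs => Ga_bound x hn hs
  · exact bound_integrable
  · rw [ae_restrict_iff' measurableSet_Ioo]
    exact ae_of_all _ fun s hs => Ga_pointwise x hs

lemma split (x : ℝ) (hx : 0 < x) :
    ∫ s in Ioo (0:ℝ) 1, Ginf x s
      = (1 - Real.exp (-x^2))/x^2
        + ∫ s in (0:ℝ)..1, Real.exp (-(s - s * Real.log s) * x ^ 2) := by
  have hx2 : x^2 ≠ 0 := pow_ne_zero 2 hx.ne'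
  have hcontE : Continuous fun s : ℝ => Real.exp (-(s - s * Real.log s) * x ^ 2) :=
    Real.continuous_exp.comp
      (((continuous_id.sub Real.continuous_mul_log).neg).mul continuous_const)
  have hE_int : IntervalIntegrable (fun s : ℝ => Real.exp (-(s - s * Real.log s) * x ^ 2))
      volume 0 1 := hcontE.intervalIntegrable _ _
  have hlogE_int : IntervalIntegrable
      (fun s : ℝ => (-Real.log s) * Real.exp (-(s - s * Real.log s) * x ^ 2)) volume 0 1 := by
    rw [intervalIntegrable_iff_integrableOn_Ioo_of_le zero_le_one]
    apply Integrable.mono' (g := fun s : ℝ => 2 * s ^ (-(1:ℝ)/2))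
    · have := intervalIntegral.intervalIntegrable_rpow' (a := 0) (b := 1) (r := -(1:ℝ)/2)
        (by norm_num)
      rw [intervalIntegrable_iff_integrableOn_Ioo_of_le zero_le_one] at this
      exact this.const_mul 2
    · exact ((Real.measurable_log.neg.mul hcontE.measurable).aestronglyMeasurable).restrict
    · rw [ae_restrict_iff' measurableSet_Ioo]
      apply ae_of_all
      intro s hs
      have hsp : 0 < s := hs.1
      have hL : Real.log s < 0 := Real.log_neg hsp hs.2
      have ha : 0 ≤ s - s*Real.log s := by nlinarith
      have hEle : Real.exp (-(s - s*Real.log s) * x^2) ≤ 1 := by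
        rw [Real.exp_le_one_iff]
        nlinarith [mul_nonneg ha (sq_nonneg x)]
      have hEpos := Real.exp_pos (-(s - s*Real.log s) * x^2)
      rw [Real.norm_eq_abs, abs_of_nonneg (by nlinarith)]
      calc (-Real.log s) * Real.exp (-(s - s*Real.log s) * x^2) ≤ -Real.log s := by nlinarith
        _ ≤ 2 * s ^ (-(1:ℝ)/2) := neg_log_le hsp
  have hFTC : ∫ s in (0:ℝ)..1, (-Real.log s) * Real.exp (-(s - s * Real.log s) * x ^ 2)
      = (1 - Real.exp (-x^2))/x^2 := by
    have hFcont : ContinuousOn (fun s : ℝ => -Real.exp (-(s - s*Real.log s) * x^2) / x^2)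
        (Icc 0 1) := (hcontE.neg.div_const _).continuousOn
    have hFderiv : ∀ s ∈ Ioo (0:ℝ) 1, HasDerivWithinAt
        (fun s : ℝ => -Real.exp (-(s - s*Real.log s) * x^2) / x^2)
        ((-Real.log s) * Real.exp (-(s - s*Real.log s) * x^2)) (Ioi s) s := by
      intro s hs
      have hw : HasDerivAt (fun s : ℝ => s - s * Real.log s) (1 - (Real.log s + 1)) s :=
        (hasDerivAt_id s).sub (Real.hasDerivAt_mul_log hs.1.ne')
      have h1 : HasDerivAt (fun s : ℝ => -(s - s*Real.log s) * x^2)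
          (-(1 - (Real.log s + 1)) * x^2) s := (hw.neg).mul_const _
      have h3 := (h1.exp.neg).div_const (x^2)
      refine h3.hasDerivWithinAt.congr_deriv ?_
      rw [div_eq_iff hx2]
      ring
    rw [intervalIntegral.integral_eq_sub_of_hasDeriv_right_of_le zero_le_one hFcont hFderiv
      hlogE_int]
    norm_num [Real.log_one, Real.log_zero]
    ring
  rw [← MeasureTheory.integral_Ioc_eq_integral_Ioo,
    ← intervalIntegral.integral_of_le zero_le_one]
  have hsplit : EqOn (Ginf x) (fun s => (-Real.log s) * Real.exp (-(s - s * Real.log s) * x ^ 2)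
      + Real.exp (-(s - s * Real.log s) * x ^ 2)) (uIcc (0:ℝ) 1) := fun s _ => by
    simp only [Ginf]; ring
  rw [intervalIntegral.integral_congr hsplit,
    intervalIntegral.integral_add hlogE_int hE_int, hFTC]

/-- Theorem 1.2: for every `x > 0`, the expected density
`𝔻_{|pₙ|}(x) = 2πx·𝔻_{pₙ}(x) = 2(n−1)x ∫₁^∞ ((n(r−1)+1)/r^(n+2)) e^{−((n(r−1)+1)/rⁿ) x²} dr`
of nonvanishing critical values of `|pₙ|` converges, as `n → ∞`, to
`2(1 − e^{−x²})/x + 2x ∫₀¹ e^{−(s − s log s) x²} ds`. -/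
theorem su2_modulus_critical_values_density_limit (x : ℝ) (hx : 0 < x) :
    Tendsto
      (fun n : ℕ =>
        2 * ((n : ℝ) - 1) * x *
          ∫ r in Ioi (1 : ℝ),
            (((n : ℝ) * (r - 1) + 1) / r ^ (n + 2)) *
              Real.exp (-(((n : ℝ) * (r - 1) + 1) / r ^ n) * x ^ 2))
      atTop
      (nhds (2 * (1 - Real.exp (-x ^ 2)) / x
        + 2 * x * ∫ s in (0:ℝ)..1, Real.exp (-(s - s * Real.log s) * x ^ 2))) := by
  have hx0 : x ≠ 0 := hx.ne'
  have hlim := (tendG x).const_mul (2*x)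
  rw [split x hx] at hlim
  have hval : 2 * x * ((1 - Real.exp (-x^2))/x^2
      + ∫ s in (0:ℝ)..1, Real.exp (-(s - s * Real.log s) * x ^ 2))
      = 2 * (1 - Real.exp (-x ^ 2)) / x
        + 2 * x * ∫ s in (0:ℝ)..1, Real.exp (-(s - s * Real.log s) * x ^ 2) := by
    field_simp
  rw [hval] at hlim
  refine hlim.congr' ?_
  filter_upwards [eventually_ge_atTop 2] with n hn
  have hm : (0:ℝ) < (n:ℝ) - 1 := by
    have : (2:ℝ) ≤ (n:ℝ) := by exact_mod_cast hn
    linarith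
  rw [cov x hn]
  field_simp
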